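/- For every μ ∈ ℂ and every x ∈ [0,1], the following exact identity holds: ∫₀ˣ e^{2iμ(x−t)} σ₁(t) (K₂e)(t) dt = ∫₀ˣ e^{2iμ(x−s)} σ₂(s) (∫₀ˢ e^{2iμ(s−t)} σ₁(t) dt)² ds + (K₂e)(x) · ∫₀ˣ e^{2iμ(x−t)} σ₁(t) dt. -/

import Mathlib

open MeasureTheory Set
open scoped ENNReal

noncomputable section

/-- The integral operator `K₁` associated with the Dirac system. -/
def K1 (σ₁ σ₂ : ℝ → ℂ) (μ : ℂ) (z : ℝ → ℂ) : ℝ → ℂ := fun x =>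
  ∫ t in (0:ℝ)..x, σ₁ t * ∫ s in t..(1:ℝ),
    Complex.exp (2 * Complex.I * μ * (s - t)) * σ₂ s * z s

/-- The integral operator `K₂` associated with the Dirac system. -/
def K2 (σ₁ σ₂ : ℝ → ℂ) (μ : ℂ) (z : ℝ → ℂ) : ℝ → ℂ := fun x =>
  ∫ t in x..(1:ℝ), σ₂ t * ∫ s in (0:ℝ)..t,
    Complex.exp (2 * Complex.I * μ * (t - s)) * σ₁ s * z s

/-- `γ₀₁(x,μ) = |∫₀ˣ e^{2iμ(x−t)} σ₁(t) dt|`. -/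
def gamma01 (σ₁ : ℝ → ℂ) (μ : ℂ) (x : ℝ) : ℝ :=
  ‖∫ t in (0:ℝ)..x, Complex.exp (2 * Complex.I * μ * (x - t)) * σ₁ t‖

/-- `γ₀₂(x,μ) = |∫ₓ¹ e^{2iμ(t−x)} σ₂(t) dt|`. -/
def gamma02 (σ₂ : ℝ → ℂ) (μ : ℂ) (x : ℝ) : ℝ :=
  ‖∫ t in x..(1:ℝ), Complex.exp (2 * Complex.I * μ * (t - x)) * σ₂ t‖

/-- `γ₁(μ) = ‖γ₀₁(·,μ)‖_{L^q[0,1]}`. -/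
def gamma1 (σ₁ : ℝ → ℂ) (q : ℝ≥0∞) (μ : ℂ) : ℝ :=
  (eLpNorm (fun x => gamma01 σ₁ μ x) q (volume.restrict (Icc (0:ℝ) 1))).toReal

/-- `γ₂(μ) = ‖γ₀₂(·,μ)‖_{L^q[0,1]}`. -/
def gamma2 (σ₂ : ℝ → ℂ) (q : ℝ≥0∞) (μ : ℂ) : ℝ :=
  (eLpNorm (fun x => gamma02 σ₂ μ x) q (volume.restrict (Icc (0:ℝ) 1))).toReal

/-- `γ̃(μ) = ∫₀¹ |σ₂| γ₀₁² + ∫₀¹ |σ₁| γ₀₂²`. -/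
def gammaT (σ₁ σ₂ : ℝ → ℂ) (μ : ℂ) : ℝ :=
  (∫ s in (0:ℝ)..1, ‖σ₂ s‖ * (gamma01 σ₁ μ s) ^ 2)
    + ∫ s in (0:ℝ)..1, ‖σ₁ s‖ * (gamma02 σ₂ μ s) ^ 2

/-- `‖σ‖_{L^p[0,1]}` where `σ(x) = max(|σ₁(x)|,|σ₂(x)|)`. -/
def sigmaNorm (σ₁ σ₂ : ℝ → ℂ) (p : ℝ≥0∞) : ℝ :=
  (eLpNorm (fun x => max ‖σ₁ x‖ ‖σ₂ x‖) p (volume.restrict (Icc (0:ℝ) 1))).toReal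

/-- The constant function `1` on `[0,1]`. -/
def eFun : ℝ → ℂ := fun _ => 1

/-- A solution of the Dirac system `y₁' + σ₁ y₂ = iμ y₁`, `y₂' + σ₂ y₁ = −iμ y₂` on `[0,1]`,
with `y₁, y₂` absolutely continuous (i.e. in `W^{1,1}[0,1]`, so each is the indefinite
integral of an integrable function, and the equations hold a.e. with those derivatives). -/
def IsDiracSolution (σ₁ σ₂ : ℝ → ℂ) (μ : ℂ) (y₁ y₂ : ℝ → ℂ) : Prop :=
  ∃ g₁ g₂ : ℝ → ℂ,
    IntervalIntegrable g₁ volume 0 1 ∧ IntervalIntegrable g₂ volume 0 1 ∧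
    (∀ x ∈ Icc (0:ℝ) 1, y₁ x = y₁ 0 + ∫ t in (0:ℝ)..x, g₁ t) ∧
    (∀ x ∈ Icc (0:ℝ) 1, y₂ x = y₂ 0 + ∫ t in (0:ℝ)..x, g₂ t) ∧
    (∀ᵐ x ∂(volume.restrict (Icc (0:ℝ) 1)),
      g₁ x + σ₁ x * y₂ x = Complex.I * μ * y₁ x) ∧
    (∀ᵐ x ∂(volume.restrict (Icc (0:ℝ) 1)),
      g₂ x + σ₂ x * y₁ x = -(Complex.I * μ) * y₂ x)

lemma swap_tri (x : ℝ) (hx : 0 ≤ x) (b h : ℝ → ℂ)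
    (hb : IntervalIntegrable b volume 0 x) (hh : IntervalIntegrable h volume 0 x) :
    (∫ t in (0:ℝ)..x, b t * ∫ u in t..x, h u)
      = ∫ u in (0:ℝ)..x, (∫ t in (0:ℝ)..u, b t) * h u := by
  have hb' : IntegrableOn b (Ioc 0 x) volume := by
    rwa [intervalIntegrable_iff, uIoc_of_le hx] at hb
  have hh' : IntegrableOn h (Ioc 0 x) volume := by
    rwa [intervalIntegrable_iff, uIoc_of_le hx] at hh
  set ν := volume.restrict (Ioc (0:ℝ) x) with hν
  have hprod : Integrable (Function.uncurry fun t u => if t < u then b t * h u else 0)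
      (ν.prod ν) := by
    have h1 : Integrable (fun p : ℝ × ℝ => b p.1 * h p.2) (ν.prod ν) := hb'.mul_prod hh'
    have h2 := h1.indicator (s := {p : ℝ × ℝ | p.1 < p.2})
      (measurableSet_lt measurable_fst measurable_snd)
    have heq : (Function.uncurry fun t u => if t < u then b t * h u else 0)
        = Set.indicator {p : ℝ × ℝ | p.1 < p.2} (fun p => b p.1 * h p.2) := by
      funext p; rw [Set.indicator_apply]; rfl
    rw [heq]; exact h2
  have swap := MeasureTheory.integral_integral_swap hprod
  rw [intervalIntegral.integral_of_le hx, intervalIntegral.integral_of_le hx]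
  calc ∫ t in Ioc (0:ℝ) x, b t * ∫ u in t..x, h u
      = ∫ t, (∫ u, (if t < u then b t * h u else 0) ∂ν) ∂ν := by
        apply setIntegral_congr_fun measurableSet_Ioc
        intro t ht
        show b t * (∫ u in t..x, h u) = ∫ u, (if t < u then b t * h u else 0) ∂ν
        have hiff : (fun u => if t < u then b t * h u else 0)
            = Set.indicator (Ioi t) (fun u => b t * h u) := by
          funext u; rw [Set.indicator_apply]; rfl
        rw [hiff, MeasureTheory.integral_indicator measurableSet_Ioi,
          hν, Measure.restrict_restrict measurableSet_Ioi]
        have hset : Ioi t ∩ Ioc 0 x = Ioc t x := by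
          ext u
          simp only [mem_inter_iff, mem_Ioi, mem_Ioc]
          exact ⟨fun ⟨a, _, c⟩ => ⟨a, c⟩, fun ⟨a, c⟩ => ⟨a, ht.1.trans a, c⟩⟩
        rw [hset, MeasureTheory.integral_const_mul,
          intervalIntegral.integral_of_le ht.2]
    _ = ∫ u, (∫ t, (if t < u then b t * h u else 0) ∂ν) ∂ν := swap
    _ = ∫ u in Ioc (0:ℝ) x, (∫ t in (0:ℝ)..u, b t) * h u := by
        apply setIntegral_congr_fun measurableSet_Ioc
        intro u hu
        show (∫ t, (if t < u then b t * h u else 0) ∂ν) = (∫ t in (0:ℝ)..u, b t) * h u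
        have hiff : (fun t => if t < u then b t * h u else 0)
            = Set.indicator (Iio u) (fun t => b t * h u) := by
          funext t; rw [Set.indicator_apply]; rfl
        rw [hiff, MeasureTheory.integral_indicator measurableSet_Iio,
          hν, Measure.restrict_restrict measurableSet_Iio]
        have hset : Iio u ∩ Ioc 0 x = Ioo 0 u := by
          ext t
          simp only [mem_inter_iff, mem_Iio, mem_Ioc, mem_Ioo]
          exact ⟨fun ⟨a, c, _⟩ => ⟨c, a⟩, fun ⟨c, a⟩ => ⟨a, c, (a.le.trans hu.2)⟩⟩
        rw [hset, MeasureTheory.integral_mul_const,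
          ← MeasureTheory.integral_Ioc_eq_integral_Ioo,
          intervalIntegral.integral_of_le hu.1.le]

/-- exact identity for `∫₀ˣ e^{2iμ(x−t)} σ₁(t) (K₂e)(t) dt`. -/
theorem stmt2
    (p : ℝ≥0∞) (hp1 : 1 ≤ p) (hp2 : p < 2)
    (σ₁ σ₂ : ℝ → ℂ) (hσ₁m : Measurable σ₁) (hσ₂m : Measurable σ₂)
    (hσ₁ : MemLp σ₁ p (volume.restrict (Icc (0:ℝ) 1)))
    (hσ₂ : MemLp σ₂ p (volume.restrict (Icc (0:ℝ) 1))) :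
    ∀ μ : ℂ, ∀ x ∈ Icc (0:ℝ) 1,
      (∫ t in (0:ℝ)..x, Complex.exp (2*Complex.I*μ*(x - t)) * σ₁ t * K2 σ₁ σ₂ μ eFun t)
        = (∫ s in (0:ℝ)..x, Complex.exp (2*Complex.I*μ*(x - s)) * σ₂ s *
            (∫ t in (0:ℝ)..s, Complex.exp (2*Complex.I*μ*(s - t)) * σ₁ t)^2)
          + K2 σ₁ σ₂ μ eFun x *
            ∫ t in (0:ℝ)..x, Complex.exp (2*Complex.I*μ*(x - t)) * σ₁ t := by
  intro μ x hx
  obtain ⟨hx0, hx1⟩ := hx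
  set E : ℝ → ℂ := fun s => Complex.exp (2*Complex.I*μ*s) with hE
  set b : ℝ → ℂ := fun t => Complex.exp (-(2*Complex.I*μ*t)) * σ₁ t with hbdef
  set B : ℝ → ℂ := fun s => ∫ t in (0:ℝ)..s, b t with hBdef
  have key : ∀ a c : ℝ, Complex.exp (2*Complex.I*μ*((a:ℂ) - c))
      = E a * Complex.exp (-(2*Complex.I*μ*c)) := by
    intro a c
    rw [hE, ← Complex.exp_add]
    congr 1; ring
  have keysq : ∀ a c : ℝ, Complex.exp (2*Complex.I*μ*((a:ℂ) - c)) * (E c)^2 = E a * E c := by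
    intro a c
    rw [hE, sq, ← Complex.exp_add, ← Complex.exp_add, ← Complex.exp_add]
    congr 1; ring
  have hinner : ∀ u : ℝ, (∫ s in (0:ℝ)..u, Complex.exp (2*Complex.I*μ*((u:ℂ) - s)) * σ₁ s)
      = E u * B u := by
    intro u
    rw [hBdef, ← intervalIntegral.integral_const_mul]
    apply intervalIntegral.integral_congr
    intro s _
    show Complex.exp (2*Complex.I*μ*((u:ℂ) - (s:ℂ))) * σ₁ s = E u * b s
    rw [key u s]
    simp only [hbdef]
    ring
  set h : ℝ → ℂ := fun u => σ₂ u * (E u * B u) with hhdef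
  have hK2 : ∀ t : ℝ, K2 σ₁ σ₂ μ eFun t = ∫ u in t..(1:ℝ), h u := by
    intro t
    unfold K2
    apply intervalIntegral.integral_congr
    intro u _
    show σ₂ u * (∫ s in (0:ℝ)..u, Complex.exp (2*Complex.I*μ*((u:ℂ) - s)) * σ₁ s * eFun s)
        = h u
    have h1 : (∫ s in (0:ℝ)..u, Complex.exp (2*Complex.I*μ*((u:ℂ) - s)) * σ₁ s * eFun s)
        = E u * B u := by
      rw [← hinner u]
      apply intervalIntegral.integral_congr
      intro s _
      simp [eFun]
    rw [h1, hhdef]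
  -- integrability
  have huIcc : uIcc (0:ℝ) 1 = Icc 0 1 := uIcc_of_le zero_le_one
  have hmem : ∀ a : ℝ, 0 ≤ a → a ≤ 1 → a ∈ uIcc (0:ℝ) 1 := by
    intro a h1 h2; rw [huIcc]; exact ⟨h1, h2⟩
  have hcontexp : Continuous fun t : ℝ => Complex.exp (-(2*Complex.I*μ*t)) := by fun_prop
  have hbIcc : IntegrableOn b (Icc (0:ℝ) 1) volume :=
    IntegrableOn.continuousOn_mul hcontexp.continuousOn (hσ₁.integrable hp1) isCompact_Icc
  have hb1 : IntervalIntegrable b volume 0 1 := by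
    apply IntegrableOn.intervalIntegrable; rwa [huIcc]
  have hBcont : ContinuousOn B (Icc 0 1) := by
    rw [← huIcc]
    apply intervalIntegral.continuousOn_primitive_interval
    rwa [huIcc]
  have hEBcont : ContinuousOn (fun u => E u * B u) (Icc (0:ℝ) 1) :=
    (Continuous.continuousOn (by fun_prop : Continuous E)).mul hBcont
  have hhIcc : IntegrableOn h (Icc (0:ℝ) 1) volume :=
    IntegrableOn.mul_continuousOn (hσ₂.integrable hp1) hEBcont isCompact_Icc
  have hh1 : IntervalIntegrable h volume 0 1 := by
    apply IntegrableOn.intervalIntegrable; rwa [huIcc]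
  have hsub : uIcc (0:ℝ) x ⊆ uIcc (0:ℝ) 1 :=
    uIcc_subset_uIcc (hmem 0 le_rfl zero_le_one) (hmem x hx0 hx1)
  have hbx : IntervalIntegrable b volume 0 x := hb1.mono_set hsub
  have hhx : IntervalIntegrable h volume 0 x := hh1.mono_set hsub
  set G : ℝ → ℂ := K2 σ₁ σ₂ μ eFun with hGdef
  have hGsplit : ∀ t ∈ uIcc (0:ℝ) x, G t = (∫ u in t..x, h u) + G x := by
    intro t ht
    rw [uIcc_of_le hx0] at ht
    rw [hK2 t, hK2 x]
    rw [intervalIntegral.integral_add_adjacent_intervals]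
    · exact hh1.mono_set (uIcc_subset_uIcc (hmem t ht.1 (ht.2.trans hx1)) (hmem x hx0 hx1))
    · exact hh1.mono_set (uIcc_subset_uIcc (hmem x hx0 hx1) (hmem 1 zero_le_one le_rfl))
  have hIcont : ContinuousOn (fun t => ∫ u in t..x, h u) (uIcc (0:ℝ) x) := by
    apply intervalIntegral.continuousOn_primitive_interval_left
    rw [uIcc_of_le hx0]
    exact hhIcc.mono_set (Icc_subset_Icc le_rfl hx1)
  have I1 : IntervalIntegrable (fun t => b t * ∫ u in t..x, h u) volume 0 x :=
    hbx.mul_continuousOn hIcont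
  have I2 : IntervalIntegrable (fun t => b t * G x) volume 0 x :=
    hbx.mul_continuousOn continuousOn_const
  -- LHS computation
  have hLHS : (∫ t in (0:ℝ)..x, Complex.exp (2*Complex.I*μ*((x:ℂ) - t)) * σ₁ t * G t)
      = E x * ((∫ u in (0:ℝ)..x, B u * h u) + B x * G x) := by
    have step1 : (∫ t in (0:ℝ)..x, Complex.exp (2*Complex.I*μ*((x:ℂ) - t)) * σ₁ t * G t)
        = E x * ∫ t in (0:ℝ)..x, b t * G t := by
      rw [← intervalIntegral.integral_const_mul]
      apply intervalIntegral.integral_congr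
      intro t _
      show Complex.exp (2*Complex.I*μ*((x:ℂ) - (t:ℂ))) * σ₁ t * G t = E x * (b t * G t)
      rw [key x t]
      simp only [hbdef]
      ring
    have step2 : (∫ t in (0:ℝ)..x, b t * G t)
        = (∫ t in (0:ℝ)..x, (b t * ∫ u in t..x, h u) + b t * G x) := by
      apply intervalIntegral.integral_congr
      intro t ht
      show b t * G t = (b t * ∫ u in t..x, h u) + b t * G x
      rw [hGsplit t ht]
      ring
    have step3 : (∫ t in (0:ℝ)..x, (b t * ∫ u in t..x, h u) + b t * G x)
        = (∫ t in (0:ℝ)..x, b t * ∫ u in t..x, h u) + ∫ t in (0:ℝ)..x, b t * G x :=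
      intervalIntegral.integral_add I1 I2
    have step4 : (∫ t in (0:ℝ)..x, b t * ∫ u in t..x, h u)
        = ∫ u in (0:ℝ)..x, B u * h u := by
      rw [swap_tri x hx0 b h hbx hhx]
    have step5 : (∫ t in (0:ℝ)..x, b t * G x) = B x * G x := by
      rw [intervalIntegral.integral_mul_const, hBdef]
    rw [step1, step2, step3, step4, step5]
  -- RHS first term
  have hRHS1 : (∫ s in (0:ℝ)..x, Complex.exp (2*Complex.I*μ*((x:ℂ) - s)) * σ₂ s *
        (∫ t in (0:ℝ)..s, Complex.exp (2*Complex.I*μ*((s:ℂ) - t)) * σ₁ t)^2)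
      = E x * ∫ s in (0:ℝ)..x, B s * h s := by
    rw [← intervalIntegral.integral_const_mul]
    apply intervalIntegral.integral_congr
    intro s _
    show Complex.exp (2*Complex.I*μ*((x:ℂ) - (s:ℂ))) * σ₂ s *
        (∫ t in (0:ℝ)..s, Complex.exp (2*Complex.I*μ*((s:ℂ) - t)) * σ₁ t)^2
      = E x * (B s * h s)
    rw [hinner s, hhdef]
    have := keysq x s
    linear_combination (σ₂ s * (B s)^2) * this
  rw [hLHS, hRHS1, hinner x]
  ring
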